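/- The deformation tensor of the preferred vector field is expressed through the contortion tensor by θ_{ab} := h_a^c h_b^d ∇_{(c} v_{d)} = −K_{c(ab)} v^c + v_{(a} K_{b)cd} v^c v^d, and its trace, the expansion, is θ := η^{ab} θ_{ab} = K^a{}_{ba} v^b. -/
import Mathlib


open Finset

noncomputable section

/- Index set {0,1,2,3}. -/
abbrev Idx := Fin 4

/-- The Minkowski metric η_{ab} = diag(−1,1,1,1) (which equals its inverse η^{ab}). -/
def ηm (a b : Idx) : ℝ := if a = b then (if a = (0 : Idx) then -1 else 1) else 0

/-- Lowered components of a vector: v_a = η_{ab} v^b. -/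
def lo (v : Idx → ℝ) (a : Idx) : ℝ := ∑ b, ηm a b * v b

/-- Mixed projection tensor h_a^b = δ_a^b + v_a v^b. -/
def hmix (v : Idx → ℝ) (a b : Idx) : ℝ := (if a = b then 1 else 0) + lo v a * v b

/-- Fully lowered projection tensor h_{ab} = η_{ab} + v_a v_b. -/
def hlo (v : Idx → ℝ) (a b : Idx) : ℝ := ηm a b + lo v a * lo v b

/- Rank-3 tensors (all indices lowered). -/
abbrev T3 := Idx → Idx → Idx → ℝ

/-- The covariant derivative of the preferred vector field: ∇_a v_b := K_{bca} v^c. -/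
def nab (K : T3) (v : Idx → ℝ) (a b : Idx) : ℝ := ∑ c, K b c a * v c

/-- The acceleration v̇_a = K_{abc} v^b v^c. -/
def vdot (K : T3) (v : Idx → ℝ) (a : Idx) : ℝ := ∑ b, ∑ c, K a b c * v b * v c

/-- The deformation tensor θ_{ab} = h_a^c h_b^d ∇_{(c} v_{d)}. -/
def deform (K : T3) (v : Idx → ℝ) (a b : Idx) : ℝ :=
  ∑ c, ∑ d, hmix v a c * hmix v b d * ((nab K v c d + nab K v d c) / 2)

lemma key (S : Idx → Idx → ℝ) (u w : Idx → ℝ) (a b : Idx) :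
    (∑ c, ∑ d, ((if a = c then (1:ℝ) else 0) + u a * w c) * ((if b = d then (1:ℝ) else 0) + u b * w d) * S c d)
    = S a b + u b * (∑ d, w d * S a d) + u a * (∑ c, w c * S c b)
      + u a * u b * (∑ c, ∑ d, w c * (w d * S c d)) := by
  simp only [add_mul, mul_add, Finset.sum_add_distrib, ite_mul, mul_ite, one_mul, zero_mul,
    mul_zero, Finset.mul_sum, Finset.sum_ite_eq, Finset.mem_univ, if_true, Finset.sum_ite_irrel,
    Finset.sum_const_zero]
  have e1 : (∑ x : Idx, ∑ y : Idx, u a * w x * (u b * w y) * S x y)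
      = ∑ x : Idx, ∑ y : Idx, u a * u b * (w x * (w y * S x y)) := by
    apply Finset.sum_congr rfl; intros; apply Finset.sum_congr rfl; intros; ring
  have e2 : (∑ x : Idx, u a * w x * 1 * S x b) = ∑ x : Idx, u a * (w x * S x b) := by
    apply Finset.sum_congr rfl; intros; ring
  have e3 : (∑ x : Idx, u b * w x * S a x) = ∑ x : Idx, u b * (w x * S a x) := by
    apply Finset.sum_congr rfl; intros; ring
  rw [e1, e2, e3]
  ring

lemma antivanish (f : Idx → Idx → ℝ) (hf : ∀ a b, f a b = -f b a) :
    (∑ a, ∑ b, f a b) = 0 := by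
  have h1 : (∑ a : Idx, ∑ b : Idx, f a b) = ∑ b : Idx, ∑ a : Idx, f a b := Finset.sum_comm
  have h2 : (∑ b : Idx, ∑ a : Idx, f a b) = ∑ b : Idx, ∑ a : Idx, -f b a := by
    apply Finset.sum_congr rfl; intros b _; apply Finset.sum_congr rfl; intros a _
    rw [hf a b]
  have h3 : (∑ b : Idx, ∑ a : Idx, -f b a) = -(∑ b : Idx, ∑ a : Idx, f b a) := by
    simp [Finset.sum_neg_distrib]
  have := h1.trans (h2.trans h3)
  linarith

set_option maxHeartbeats 1000000 in
/-- The deformation tensor is expressed through the contortion tensor as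
`θ_{ab} = −K_{c(ab)} v^c + v_{(a} K_{b)cd} v^c v^d`, and its trace, the expansion, is
`θ = η^{ab} θ_{ab} = K^a{}_{ba} v^b`. -/
theorem statement9 (v : Idx → ℝ) (hv : (∑ a, lo v a * v a) = -1)
    (K : T3) (hK : ∀ a b c, K a b c = -K b a c) :
    (∀ a b : Idx,
      deform K v a b
        = -(∑ c, ((K c a b + K c b a) / 2) * v c)
          + (lo v a * vdot K v b + lo v b * vdot K v a) / 2) ∧
    (∑ a, ∑ b, ηm a b * deform K v a b)
      = ∑ a, ∑ b, ∑ c, ηm a c * K c b a * v b := by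
  have hKd : ∀ a c, K a a c = 0 := fun a c => by have := hK a a c; linarith
  -- ∑_d v^d ∇_c v_d = 0
  have lB : ∀ c, (∑ d, v d * nab K v c d) = 0 := by
    intro c
    have h : (∑ d, v d * nab K v c d) = ∑ d, ∑ e, K d e c * (v e * v d) := by
      apply Finset.sum_congr rfl; intros d _
      rw [nab, Finset.mul_sum]
      apply Finset.sum_congr rfl; intros e _; ring
    rw [h]
    exact antivanish _ (fun d e => by rw [hK d e c]; ring)
  -- ∑_c v^c ∇_c v_d = v̇_d
  have lA : ∀ d, (∑ c, v c * nab K v c d) = vdot K v d := by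
    intro d
    have h : (∑ c, v c * nab K v c d) = ∑ c, ∑ e, K d e c * v e * v c := by
      apply Finset.sum_congr rfl; intros c _
      rw [nab, Finset.mul_sum]
      apply Finset.sum_congr rfl; intros e _; ring
    rw [h, Finset.sum_comm, vdot]
  -- ∑_c v^c v̇_c = 0
  have lC : (∑ c, v c * vdot K v c) = 0 := by
    have h : (∑ c, v c * vdot K v c)
        = ∑ c, ∑ b, (∑ e, K c b e * v e) * v b * v c := by
      apply Finset.sum_congr rfl; intros c _
      rw [vdot, Finset.mul_sum]
      apply Finset.sum_congr rfl; intros b _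
      rw [Finset.sum_mul, Finset.sum_mul, Finset.mul_sum]
      apply Finset.sum_congr rfl; intros e _; ring
    rw [h]
    apply antivanish
    intros a b
    have h4 : (∑ e, K a b e * v e) = -(∑ e, K b a e * v e) := by
      rw [← Finset.sum_neg_distrib]
      apply Finset.sum_congr rfl; intros e _
      rw [hK a b e]; ring
    rw [h4]; ring
  set S : Idx → Idx → ℝ := fun c d => (nab K v c d + nab K v d c) / 2 with hS
  have hd : ∀ a b, deform K v a b
      = S a b + lo v b * (∑ d, v d * S a d) + lo v a * (∑ c, v c * S c b)
        + lo v a * lo v b * (∑ c, ∑ d, v c * (v d * S c d)) := by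
    intro a b
    rw [deform]
    exact key S (lo v) v a b
  have hSd : ∀ a, (∑ d, v d * S a d) = vdot K v a / 2 := by
    intro a
    have h : (∑ d, v d * S a d) = ∑ d, (v d * nab K v a d / 2 + v d * nab K v d a / 2) := by
      apply Finset.sum_congr rfl; intros d _; rw [hS]; ring
    rw [h, Finset.sum_add_distrib, ← Finset.sum_div, ← Finset.sum_div, lB a, lA a]
    ring
  have hSc : ∀ b, (∑ c, v c * S c b) = vdot K v b / 2 := by
    intro b
    have h : (∑ c, v c * S c b) = ∑ c, (v c * nab K v c b / 2 + v c * nab K v b c / 2) := by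
      apply Finset.sum_congr rfl; intros c _; rw [hS]; ring
    rw [h, Finset.sum_add_distrib, ← Finset.sum_div, ← Finset.sum_div, lA b, lB b]
    ring
  have hSS : (∑ c, ∑ d, v c * (v d * S c d)) = 0 := by
    have h : (∑ c, ∑ d, v c * (v d * S c d)) = ∑ c, v c * (vdot K v c / 2) := by
      apply Finset.sum_congr rfl; intros c _
      rw [← Finset.mul_sum, hSd c]
    rw [h]
    have h2 : (∑ c, v c * (vdot K v c / 2)) = (∑ c, v c * vdot K v c) / 2 := by
      rw [Finset.sum_div]
      apply Finset.sum_congr rfl; intros c _; ring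
    rw [h2, lC]; ring
  have hS0 : ∀ a b, S a b = -(∑ c, ((K c a b + K c b a) / 2) * v c) := by
    intro a b
    rw [hS]
    simp only [nab]
    rw [← Finset.sum_neg_distrib, add_div, Finset.sum_div, Finset.sum_div,
      ← Finset.sum_add_distrib]
    apply Finset.sum_congr rfl; intros c _
    linear_combination (v c / 2) * hK c a b + (v c / 2) * hK c b a
  have part1 : ∀ a b : Idx,
      deform K v a b
        = -(∑ c, ((K c a b + K c b a) / 2) * v c)
          + (lo v a * vdot K v b + lo v b * vdot K v a) / 2 := by
    intro a b
    rw [hd a b, hSd a, hSc b, hSS, hS0 a b]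
    ring
  refine ⟨part1, ?_⟩
  have lo2 : ∀ b, (∑ a, ηm a b * lo v a) = v b := by
    intro b; fin_cases b <;> simp [lo, ηm, Fin.sum_univ_four] <;> ring
  have lo2' : ∀ a, (∑ b, ηm a b * lo v b) = v a := by
    intro a; fin_cases a <;> simp [lo, ηm, Fin.sum_univ_four] <;> ring
  have T1 : (∑ a, ∑ b, ηm a b * (lo v a * vdot K v b)) = 0 := by
    rw [Finset.sum_comm]
    have p : ∀ b : Idx, (∑ a, ηm a b * (lo v a * vdot K v b)) = v b * vdot K v b := by
      intro b
      have q : (∑ a, ηm a b * (lo v a * vdot K v b)) = (∑ a, ηm a b * lo v a) * vdot K v b := by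
        rw [Finset.sum_mul]
        apply Finset.sum_congr rfl; intros; ring
      rw [q, lo2 b]
    rw [Finset.sum_congr rfl (fun b _ => p b)]
    exact lC
  have T2 : (∑ a, ∑ b, ηm a b * (lo v b * vdot K v a)) = 0 := by
    have p : ∀ a : Idx, (∑ b, ηm a b * (lo v b * vdot K v a)) = v a * vdot K v a := by
      intro a
      have q : (∑ b, ηm a b * (lo v b * vdot K v a)) = (∑ b, ηm a b * lo v b) * vdot K v a := by
        rw [Finset.sum_mul]
        apply Finset.sum_congr rfl; intros; ring
      rw [q, lo2' a]
    rw [Finset.sum_congr rfl (fun a _ => p a)]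
    exact lC
  have step1 : (∑ a, ∑ b, ηm a b * deform K v a b)
      = (∑ a, ∑ b, ηm a b * (-(∑ c, ((K c a b + K c b a) / 2) * v c)))
        + ((∑ a, ∑ b, ηm a b * (lo v a * vdot K v b))
          + (∑ a, ∑ b, ηm a b * (lo v b * vdot K v a))) / 2 := by
    have p : ∀ a b : Idx, ηm a b * deform K v a b
        = ηm a b * (-(∑ c, ((K c a b + K c b a) / 2) * v c))
          + (ηm a b * (lo v a * vdot K v b) / 2 + ηm a b * (lo v b * vdot K v a) / 2) := by
      intro a b; rw [part1 a b]; ring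
    simp only [p, Finset.sum_add_distrib, ← Finset.sum_div]
    ring
  rw [step1, T1, T2]
  simp [ηm, Fin.sum_univ_four]
  simp only [hK 1 0, hK 2 0, hK 3 0, hK 2 1, hK 3 1, hK 3 2, hKd]
  ring
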